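/- The affine Weyl group W_l (as above, W ⋉ l'čΛ_r if D | l', W ⋉ l'Λ_r otherwise) is exactly the largest subgroup of W^† = W ⋉ (l/2)čΛ_r that preserves the root lattice Λ_r under the translated action σ·λ = σ(λ+ρ)-ρ. In particular W_l = W^† when 2D divides l. -/

import Mathlib

open scoped RealInnerProductSpace Pointwise

/-- The reflection in the hyperplane orthogonal to `α`. -/
noncomputable def rootReflection {E : Type*} [NormedAddCommGroup E]
    [InnerProductSpace ℝ E] (α : E) (x : E) : E :=
  x - (2 * ⟪x, α⟫ / ⟪α, α⟫) • α

namespace AWG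
variable {E : Type*} [NormedAddCommGroup E] [InnerProductSpace ℝ E]

noncomputable def cf (α x : E) : ℝ := 2 * ⟪x, α⟫ / ⟪α, α⟫

lemma rr_eq (α x : E) : rootReflection α x = x - cf α x • α := rfl

lemma cf_add (α x y : E) : cf α (x + y) = cf α x + cf α y := by
  simp [cf, inner_add_left]; ring

lemma cf_smul (α : E) (c : ℝ) (x : E) : cf α (c • x) = c * cf α x := by
  simp [cf, real_inner_smul_left]; ring

lemma cf_neg (α x : E) : cf α (-x) = -cf α x := by
  simp [cf, inner_neg_left]; ring

lemma cf_zero (α : E) : cf α 0 = 0 := by simp [cf]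

lemma cf_sub (α x y : E) : cf α (x - y) = cf α x - cf α y := by
  simp [cf, inner_sub_left]; ring

lemma cf_self (α : E) (hα : α ≠ 0) : cf α α = 2 := by
  have : ⟪α, α⟫ ≠ 0 := fun h => hα ((inner_self_eq_zero (𝕜 := ℝ)).mp h)
  rw [cf, mul_div_assoc, div_self this, mul_one]

lemma rr_add (α x y : E) : rootReflection α (x + y)
    = rootReflection α x + rootReflection α y := by
  simp only [rr_eq, cf_add, add_smul]; abel

lemma rr_smul (α : E) (c : ℝ) (x : E) :
    rootReflection α (c • x) = c • rootReflection α x := by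
  simp only [rr_eq, cf_smul, smul_sub, mul_smul]

lemma rr_neg (α x : E) : rootReflection α (-x) = -rootReflection α x := by
  simp only [rr_eq, cf_neg, neg_smul]; abel

lemma rr_sub (α x y : E) : rootReflection α (x - y)
    = rootReflection α x - rootReflection α y := by
  simp only [rr_eq, cf_sub, sub_smul]; abel

lemma rr_zero (α : E) : rootReflection α 0 = 0 := by simp [rr_eq, cf_zero]

lemma rr_self (α : E) (hα : α ≠ 0) : rootReflection α α = -α := by
  rw [rr_eq, cf_self α hα, two_smul]; abel

lemma rr_invol (α : E) (hα : α ≠ 0) (x : E) :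
    rootReflection α (rootReflection α x) = x := by
  rw [rr_eq α (rootReflection α x), rr_eq α x]
  simp only [cf_sub, cf_smul, cf_self α hα]
  have : cf α x - cf α x * 2 = -cf α x := by ring
  rw [this, neg_smul]; abel

lemma rr_inner (α : E) (hα : α ≠ 0) (x y : E) :
    ⟪rootReflection α x, rootReflection α y⟫ = ⟪x, y⟫ := by
  have h : ⟪α, α⟫ ≠ 0 := fun h => hα ((inner_self_eq_zero (𝕜 := ℝ)).mp h)
  simp only [rr_eq, cf, inner_sub_left, inner_sub_right, real_inner_smul_left,
    real_inner_smul_right]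
  rw [real_inner_comm α y, real_inner_comm α x]
  field_simp
  ring

lemma cf_sum (α : E) (S : Finset E) (g : E → E) :
    cf α (∑ β ∈ S, g β) = ∑ β ∈ S, cf α (g β) := by
  classical
  induction S using Finset.cons_induction with
  | empty => simp [cf_zero]
  | cons a s ha ih => simp only [Finset.sum_cons, cf_add, ih]

end AWG

open AWG in
/-- the affine Weyl group `W_l` (`= W ⋉ l'čΛ_r` if `D ∣ l'`,
`= W ⋉ l'Λ_r` otherwise) is exactly the subgroup of elements of
`W^† = W ⋉ (l/2)čΛ_r` that preserve the root lattice `Λ_r` under the translated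
action `σ·λ = σ(λ+ρ) - ρ`; in particular `W_l = W^†` when `2D ∣ l`. -/
theorem affine_weyl_group_largest_subgroup
    {E : Type*} [NormedAddCommGroup E] [InnerProductSpace ℝ E]
    (Φ Δ Pos : Finset E)
    (h0 : (0 : E) ∉ Φ)
    (hrefl : ∀ α ∈ Φ, ∀ β ∈ Φ, rootReflection α β ∈ Φ)
    (hint : ∀ α ∈ Φ, ∀ β ∈ Φ, ∃ n : ℤ, 2 * ⟪β, α⟫ / ⟪α, α⟫ = (n : ℝ))
    (hred : ∀ α ∈ Φ, ∀ c : ℝ, c • α ∈ Φ → c = 1 ∨ c = -1)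
    (hirr : ¬ ∃ Φ₁ Φ₂ : Set E, Φ₁.Nonempty ∧ Φ₂.Nonempty ∧ Φ₁ ∪ Φ₂ = ↑Φ ∧
      Disjoint Φ₁ Φ₂ ∧ ∀ α ∈ Φ₁, ∀ β ∈ Φ₂, ⟪α, β⟫ = 0)
    (hΔ : ↑Δ ⊆ (Φ : Set E))
    (hbasis : LinearIndependent ℝ (fun a : Δ => (a : E)))
    (hdecomp : ∀ β ∈ Φ, ∃ c : Δ → ℝ, (β = ∑ a, c a • (a : E)) ∧
      ((∀ a, 0 ≤ c a) ∨ (∀ a, c a ≤ 0)))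
    (hPos : ∀ β : E, β ∈ Pos ↔ β ∈ Φ ∧
      ∃ c : Δ → ℝ, (∀ a, 0 ≤ c a) ∧ β = ∑ a, c a • (a : E))
    (ρ : E) (hρ : ρ = (2⁻¹ : ℝ) • ∑ β ∈ Pos, β)
    (D : ℕ) (hD : D = 1 ∨ Nat.Prime D)
    (hlen : ∀ β ∈ Φ, ⟪β, β⟫ = 2 ∨ ⟪β, β⟫ = 2 * D)
    (l l' : ℕ) (hl : 0 < l) (hl' : l' = if Odd l then l else l / 2)
    (Λr coΛr M Mdag : AddSubgroup E)
    (hΛr : Λr = AddSubgroup.closure (↑Φ : Set E))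
    (hcoΛr : coΛr = AddSubgroup.closure {x : E | ∃ β ∈ Φ, x = (2 / ⟪β, β⟫) • β})
    (hM : M = if D ∣ l' then (l' : ℤ) • coΛr else (l' : ℤ) • Λr)
    (hMdag : Mdag = ((l : ℝ) / 2) • coΛr)
    (Wl Wdag : Subgroup (Equiv.Perm E))
    (hWl : Wl = Subgroup.closure
      ({g : Equiv.Perm E | ∃ α ∈ Φ, ∀ x, g x = rootReflection α x}
        ∪ {g : Equiv.Perm E | ∃ m ∈ M, ∀ x, g x = x + m}))
    (hWdag : Wdag = Subgroup.closure
      ({g : Equiv.Perm E | ∃ α ∈ Φ, ∀ x, g x = rootReflection α x}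
        ∪ {g : Equiv.Perm E | ∃ m ∈ Mdag, ∀ x, g x = x + m})) :
    Wl ≤ Wdag ∧
    (∀ g : Equiv.Perm E, g ∈ Wdag →
      (g ∈ Wl ↔ ∀ μ : E, μ ∈ Λr → g (μ + ρ) - ρ ∈ Λr)) ∧
    (2 * D ∣ l → Wl = Wdag) := by
  classical
  -- basic facts
  have hD1 : 1 ≤ D := by rcases hD with h | h; omega; exact h.one_lt.le
  have hne : ∀ α ∈ Φ, α ≠ 0 := fun α hα h => h0 (h ▸ hα)
  have hipne : ∀ α ∈ Φ, ⟪α, α⟫ ≠ 0 := fun α hα h =>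
    hne α hα ((inner_self_eq_zero (𝕜 := ℝ)).mp h)
  have hneg : ∀ β ∈ Φ, -β ∈ Φ := fun β hβ => by
    have := hrefl β hβ β hβ
    rwa [rr_self β (hne β hβ)] at this
  have hPosΦ : ∀ β ∈ Pos, β ∈ Φ := fun β hβ => ((hPos β).mp hβ).1
  -- every root is positive or negative
  have hPosneg : ∀ β ∈ Φ, β ∈ Pos ∨ -β ∈ Pos := by
    intro β hβ
    obtain ⟨c, hc1, hc2⟩ := hdecomp β hβ
    rcases hc2 with h | h
    · exact Or.inl ((hPos β).mpr ⟨hβ, c, h, hc1⟩)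
    · refine Or.inr ((hPos (-β)).mpr ⟨hneg β hβ, fun a => -c a, fun a => by
        simpa using h a, ?_⟩)
      rw [hc1]; simp [Finset.sum_neg_distrib, neg_smul]
  -- Pos and -Pos are disjoint
  have hPosdisj : ∀ β ∈ Pos, -β ∉ Pos := by
    intro β hβ hβ'
    obtain ⟨hβΦ, c, hc0, hcs⟩ := (hPos β).mp hβ
    obtain ⟨_, d, hd0, hds⟩ := (hPos (-β)).mp hβ'
    have hsum : ∑ a : Δ, (c a + d a) • (a : E) = 0 := by
      simp only [add_smul, Finset.sum_add_distrib, ← hcs, ← hds]; abel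
    have := (Fintype.linearIndependent_iff.mp hbasis) (fun a => c a + d a) hsum
    have hc : ∀ a, c a = 0 := fun a => by have h1 : c a + d a = 0 := this a; have := hc0 a; have := hd0 a; linarith
    apply hne β hβΦ
    rw [hcs]; simp [hc]
  -- integrality of cf on roots
  have hcfint : ∀ α ∈ Φ, ∀ β ∈ Φ, ∃ n : ℤ, cf α β = (n : ℝ) := fun α hα β hβ =>
    hint α hα β hβ
  -- integrality of cf on the root lattice
  have hcfΛ : ∀ α ∈ Φ, ∀ μ ∈ Λr, ∃ n : ℤ, cf α μ = (n : ℝ) := by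
    intro α hα μ hμ
    rw [hΛr] at hμ
    induction hμ using AddSubgroup.closure_induction with
    | mem x hx => exact hcfint α hα x hx
    | zero => exact ⟨0, by simp [cf_zero]⟩
    | add x y hx hy ihx ihy =>
      obtain ⟨n, hn⟩ := ihx; obtain ⟨m, hm⟩ := ihy
      exact ⟨n + m, by rw [cf_add, hn, hm]; push_cast; ring⟩
    | neg x hx ihx =>
      obtain ⟨n, hn⟩ := ihx
      exact ⟨-n, by rw [cf_neg, hn]; push_cast; ring⟩
  -- evenness of sum of cf over positive roots  (KEY PARITY LEMMA)
  have hparity : ∀ α ∈ Φ, ∃ k : ℤ, ∑ β ∈ Pos, cf α β = 2 * (k : ℝ) := by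
    intro α hα
    have hα0 : α ≠ 0 := hne α hα
    set f : E → E := fun β => if rootReflection α β ∈ Pos then rootReflection α β
      else -(rootReflection α β) with hf
    have hfPos : ∀ β ∈ Pos, f β ∈ Pos := by
      intro β hβ
      by_cases h : rootReflection α β ∈ Pos
      · simpa [hf, h] using h
      · have hrβ : rootReflection α β ∈ Φ := hrefl α hα β (hPosΦ β hβ)
        rcases hPosneg _ hrβ with h' | h'
        · exact absurd h' h
        · simpa [hf, h] using h'
    have hff : ∀ β ∈ Pos, f (f β) = β := by
      intro β hβ
      by_cases h : rootReflection α β ∈ Pos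
      · simp only [hf, if_pos h]
        rw [if_pos (by rw [rr_invol α hα0]; exact hβ), rr_invol α hα0]
      · simp only [hf, if_neg h]
        rw [rr_neg, rr_invol α hα0, if_neg (hPosdisj β hβ), neg_neg]
    have key : ∀ n (T : Finset E), T.card ≤ n → (∀ β ∈ T, β ∈ Pos) →
        (∀ β ∈ T, f β ∈ T) → ∃ k : ℤ, ∑ β ∈ T, cf α β = 2 * (k : ℝ) := by
      intro n
      induction n with
      | zero =>
        intro T hT _ _
        have : T = ∅ := Finset.card_eq_zero.mp (Nat.le_zero.mp hT)
        exact ⟨0, by simp [this]⟩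
      | succ n ih =>
        intro T hT hTP hTf
        rcases T.eq_empty_or_nonempty with rfl | ⟨β, hβ⟩
        · exact ⟨0, by simp⟩
        have hβP := hTP β hβ
        have hβΦ := hPosΦ β hβP
        obtain ⟨mβ, hmβ⟩ : ∃ m : ℤ, cf α β = (m : ℝ) := hcfint α hα β hβΦ
        by_cases hfix : f β = β
        · -- singleton orbit: cf α β is even
          have heven : ∃ m : ℤ, cf α β = 2 * (m : ℝ) := by
            by_cases h : rootReflection α β ∈ Pos
            · have hfeq : f β = rootReflection α β := by simp [hf, h]
              have h1 : rootReflection α β = β := by rw [← hfeq]; exact hfix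
              rw [rr_eq] at h1
              have h2 : cf α β • α = 0 := sub_eq_self.mp h1
              rcases smul_eq_zero.mp h2 with h3 | h3
              · exact ⟨0, by rw [h3]; simp⟩
              · exact absurd h3 hα0
            · have hfeq : f β = -(rootReflection α β) := by simp [hf, h]
              have h1 : -(rootReflection α β) = β := by rw [← hfeq]; exact hfix
              rw [rr_eq, neg_sub] at h1
              have h2 : cf α β • α = β + β := by
                have := h1; rw [sub_eq_iff_eq_add] at this; rw [this]
              have h3 : (cf α β / 2) • α = β := by
                calc (cf α β / 2) • α = (2:ℝ)⁻¹ • (cf α β • α) := by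
                      rw [smul_smul, show (2:ℝ)⁻¹ * cf α β = cf α β / 2 from by ring]
                  _ = (2:ℝ)⁻¹ • (β + β) := by rw [h2]
                  _ = β := by
                      rw [← two_smul ℝ β, smul_smul]; norm_num
              rcases hred α hα (cf α β / 2) (by rw [h3]; exact hβΦ) with h4 | h4
              · exact ⟨1, by push_cast; linarith⟩
              · exact ⟨-1, by push_cast; linarith⟩
          obtain ⟨m, hm⟩ := heven
          have hcard : (T.erase β).card ≤ n := by
            have h1 := Finset.card_erase_of_mem hβ
            have h2 := Finset.card_pos.mpr ⟨β, hβ⟩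
            omega
          obtain ⟨k, hk⟩ := ih (T.erase β) hcard
            (fun γ hγ => hTP γ (Finset.mem_of_mem_erase hγ))
            (fun γ hγ => by
              have hγT := Finset.mem_of_mem_erase hγ
              refine Finset.mem_erase.mpr ⟨fun hEq => ?_, hTf γ hγT⟩
              have : γ = β := by
                rw [← hff γ (hTP γ hγT), hEq, hfix]
              exact (Finset.mem_erase.mp hγ).1 this)
          refine ⟨m + k, ?_⟩
          rw [← Finset.add_sum_erase _ _ hβ, hm, hk]; push_cast; ring
        · -- two-element orbit {β, f β}
          have hfβT : f β ∈ T := hTf β hβ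
          have heven : ∃ m : ℤ, cf α β + cf α (f β) = 2 * (m : ℝ) := by
            by_cases h : rootReflection α β ∈ Pos
            · have hfeq : f β = rootReflection α β := by rw [hf]; simp [if_pos h]
              refine ⟨0, ?_⟩
              rw [hfeq, rr_eq, cf_sub, cf_smul, cf_self α hα0]; push_cast; ring
            · have hfeq : f β = -(rootReflection α β) := by rw [hf]; simp [if_neg h]
              refine ⟨mβ, ?_⟩
              rw [hfeq, cf_neg, rr_eq, cf_sub, cf_smul, cf_self α hα0, hmβ]
              push_cast; ring
          obtain ⟨m, hm⟩ := heven
          have hfβe : f β ∈ T.erase β := Finset.mem_erase.mpr ⟨hfix, hfβT⟩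
          have hcard : ((T.erase β).erase (f β)).card ≤ n := by
            have h1 := Finset.card_erase_of_mem hβ
            have h2 := Finset.card_erase_of_mem hfβe
            have h3 := Finset.card_pos.mpr ⟨β, hβ⟩
            omega
          obtain ⟨k, hk⟩ := ih ((T.erase β).erase (f β)) hcard
            (fun γ hγ => hTP γ (Finset.mem_of_mem_erase (Finset.mem_of_mem_erase hγ)))
            (fun γ hγ => by
              have hγT : γ ∈ T := Finset.mem_of_mem_erase (Finset.mem_of_mem_erase hγ)
              have hγβ : γ ≠ β := (Finset.mem_erase.mp (Finset.mem_of_mem_erase hγ)).1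
              have hγfβ : γ ≠ f β := (Finset.mem_erase.mp hγ).1
              refine Finset.mem_erase.mpr ⟨fun hEq => ?_,
                Finset.mem_erase.mpr ⟨fun hEq => ?_, hTf γ hγT⟩⟩
              · exact hγβ (by rw [← hff γ (hTP γ hγT), hEq, hff β hβP])
              · exact hγfβ (by rw [← hff γ (hTP γ hγT), hEq]))
          refine ⟨m + k, ?_⟩
          rw [← Finset.add_sum_erase _ _ hβ, ← Finset.add_sum_erase _ _ hfβe,
            hk, ← add_assoc, hm]
          push_cast; ring
    exact key Pos.card Pos le_rfl (fun _ h => h) hfPos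
  -- integrality of cf at ρ
  have hcfρ : ∀ α ∈ Φ, ∃ n : ℤ, cf α ρ = (n : ℝ) := by
    intro α hα
    obtain ⟨k, hk⟩ := hparity α hα
    refine ⟨k, ?_⟩
    rw [hρ, cf_smul]
    have h2 : cf α (∑ β ∈ Pos, β) = ∑ β ∈ Pos, cf α β := by
      simpa using cf_sum α Pos id
    rw [h2, hk]; ring
  -- ===================== lattice lemmas =====================
  have hzr : ∀ (n : ℤ) (x : E), (n : ℤ) • x = ((n : ℝ)) • x := fun n x =>
    (Int.cast_smul_eq_zsmul ℝ n x).symm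
  have hD0 : ((D : ℕ) : ℝ) ≠ 0 := by
    have : (0:ℝ) < D := by exact_mod_cast (by omega : 0 < D)
    exact this.ne'
  have hcogen : ∀ β ∈ Φ, (2 / ⟪β, β⟫) • β ∈ coΛr := fun β hβ => by
    rw [hcoΛr]; exact AddSubgroup.subset_closure ⟨β, hβ, rfl⟩
  have hrootΛ : ∀ β ∈ Φ, β ∈ Λr := fun β hβ => by
    rw [hΛr]; exact AddSubgroup.subset_closure hβ
  have hDsmul : ∀ β ∈ Φ, ⟪β, β⟫ = 2 * D → (D:ℤ) • ((2 / ⟪β, β⟫) • β) = β := by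
    intro β hβ h2
    rw [hzr, smul_smul, h2,
      show ((((D:ℕ):ℤ)):ℝ) * (2 / (2 * ((D:ℕ):ℝ))) = 1 from by push_cast; field_simp,
      one_smul]
  have hΛco : ∀ μ ∈ Λr, μ ∈ coΛr := by
    intro μ hμ
    rw [hΛr] at hμ
    induction hμ using AddSubgroup.closure_induction with
    | mem β hβ =>
      rcases hlen β hβ with h2 | h2
      · have h3 : (2 / ⟪β, β⟫) • β = β := by rw [h2]; norm_num
        rw [← h3]; exact hcogen β hβ
      · rw [← hDsmul β hβ h2]
        exact AddSubgroup.zsmul_mem _ (hcogen β hβ) _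
    | zero => exact zero_mem _
    | add x y _ _ hx hy => exact add_mem hx hy
    | neg x _ hx => exact neg_mem hx
  have hDco : ∀ x ∈ coΛr, (D:ℤ) • x ∈ Λr := by
    intro x hx
    rw [hcoΛr] at hx
    induction hx using AddSubgroup.closure_induction with
    | mem y hy =>
      obtain ⟨β, hβ, rfl⟩ := hy
      rcases hlen β hβ with h2 | h2
      · have h3 : (2 / ⟪β, β⟫) • β = β := by rw [h2]; norm_num
        rw [h3]; exact AddSubgroup.zsmul_mem _ (hrootΛ β hβ) _
      · rw [hDsmul β hβ h2]; exact hrootΛ β hβ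
    | zero => rw [smul_zero]; exact zero_mem _
    | add x y _ _ hx hy => rw [smul_add]; exact add_mem hx hy
    | neg x _ hx => rw [smul_neg]; exact neg_mem hx
  -- M ⊆ Λr
  have hMΛ : ∀ m ∈ M, m ∈ Λr := by
    intro m hm; rw [hM] at hm
    split_ifs at hm with hDl
    · obtain ⟨u, hu, heq⟩ := (AddSubgroup.mem_smul_pointwise_iff_exists m _ coΛr).mp hm
      obtain ⟨k, hk⟩ := hDl
      have h2 : ((l':ℕ):ℤ) • u = (k:ℤ) • ((D:ℤ) • u) := by
        rw [← mul_smul]; congr 1; push_cast [hk]; ring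
      rw [← heq, h2]
      exact AddSubgroup.zsmul_mem _ (hDco u hu) _
    · obtain ⟨u, hu, heq⟩ := (AddSubgroup.mem_smul_pointwise_iff_exists m _ Λr).mp hm
      rw [← heq]; exact AddSubgroup.zsmul_mem _ hu _
  -- when l is even, l'-facts
  have hevenl : ¬ Odd l → 2 * l' = l := by
    intro hodd
    rw [hl', if_neg hodd]
    obtain ⟨k, hk⟩ := Nat.not_odd_iff_even.mp hodd
    omega
  -- M ⊆ Mdag
  have hMMdag : ∀ m ∈ M, m ∈ Mdag := by
    intro m hm; rw [hM] at hm; rw [hMdag]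
    have hex : ∃ u ∈ coΛr, ((l':ℕ):ℤ) • u = m := by
      split_ifs at hm with hDl
      · obtain ⟨u, hu, heq⟩ := (AddSubgroup.mem_smul_pointwise_iff_exists m _ coΛr).mp hm
        exact ⟨u, hu, heq⟩
      · obtain ⟨u, hu, heq⟩ := (AddSubgroup.mem_smul_pointwise_iff_exists m _ Λr).mp hm
        exact ⟨u, hΛco u hu, heq⟩
    obtain ⟨u, hu, heq⟩ := hex
    by_cases hodd : Odd l
    · have hl'l : l' = l := by rw [hl', if_pos hodd]
      refine (AddSubgroup.mem_smul_pointwise_iff_exists m _ coΛr).mpr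
        ⟨(2:ℤ) • u, AddSubgroup.zsmul_mem _ hu _, ?_⟩
      rw [hzr] at heq ⊢
      rw [smul_smul, show ((l:ℕ):ℝ)/2 * ((2:ℤ):ℝ) = ((((l':ℕ):ℤ)):ℝ) from by
        push_cast [hl'l]; ring, heq]
    · have h2l : 2 * l' = l := hevenl hodd
      refine (AddSubgroup.mem_smul_pointwise_iff_exists m _ coΛr).mpr ⟨u, hu, ?_⟩
      rw [hzr] at heq
      rw [show ((l:ℕ):ℝ)/2 = ((((l':ℕ):ℤ)):ℝ) from by
        rw [show (l:ℕ) = 2 * l' from h2l.symm]; push_cast; ring, heq]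
  -- Mdag ∩ Λr ⊆ M
  have hMdagΛM : ∀ v ∈ Mdag, v ∈ Λr → v ∈ M := by
    intro v hv hvΛ
    rw [hMdag] at hv
    obtain ⟨u, hu, huv⟩ := (AddSubgroup.mem_smul_pointwise_iff_exists v _ coΛr).mp hv
    rw [hM]
    by_cases hodd : Odd l
    · have hl'l : l' = l := by rw [hl', if_pos hodd]
      -- l•u = 2•v
      have hlu : ((l:ℕ):ℤ) • u = (2:ℤ) • v := by
        rw [hzr, hzr, ← huv, smul_smul]; congr 1; push_cast; ring
      -- Bezout for gcd(l,2)=1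
      obtain ⟨a, b, hab⟩ : ∃ a b : ℤ, a * l + b * 2 = 1 := by
        refine ⟨1, -(l/2 : ℤ), ?_⟩
        have : (l : ℤ) % 2 = 1 := by
          have := Nat.odd_iff.mp hodd; omega
        omega
      -- u = 2•w with w = a•v + b•u
      have hu2 : u = (2:ℤ) • (a • v + b • u) := by
        calc u = (a * l + b * 2) • u := by rw [hab, one_smul]
          _ = a • (((l:ℕ):ℤ) • u) + b • ((2:ℤ) • u) := by
              rw [add_smul, mul_smul, mul_smul]
          _ = a • ((2:ℤ) • v) + b • ((2:ℤ) • u) := by rw [hlu]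
          _ = (2:ℤ) • (a • v + b • u) := by
              rw [smul_add, smul_comm a (2:ℤ) v, smul_comm b (2:ℤ) u]
      have hvw : ∀ w : E, u = (2:ℤ) • w → ((l':ℕ):ℤ) • w = v := by
        intro w hw
        rw [hl'l, hzr, ← huv, hw, hzr, smul_smul]
        congr 1; push_cast; ring
      split_ifs with hDl
      · have hw : a • v + b • u ∈ coΛr :=
          add_mem (AddSubgroup.zsmul_mem _ (hΛco v hvΛ) _) (AddSubgroup.zsmul_mem _ hu _)
        exact (AddSubgroup.mem_smul_pointwise_iff_exists v _ coΛr).mpr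
          ⟨a • v + b • u, hw, hvw _ hu2⟩
      · -- first u ∈ Λr via gcd(D, l) = 1
        have hDp : Nat.Prime D := by
          rcases hD with h1 | h1
          · exact absurd (by rw [h1]; exact one_dvd _ : D ∣ l') hDl
          · exact h1
        have hDl2 : ¬ (D:ℤ) ∣ (l:ℤ) := by
          rw [Int.natCast_dvd_natCast]; rw [hl'l] at hDl; exact hDl
        obtain ⟨c, d, hcd⟩ : ∃ c d : ℤ, c * D + d * l = 1 := by
          have hcop : Nat.Coprime D l := (Nat.Prime.coprime_iff_not_dvd hDp).mpr
            (by rw [hl'l] at hDl; exact hDl)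
          refine ⟨Nat.gcdA D l, Nat.gcdB D l, ?_⟩
          have := Nat.gcd_eq_gcd_ab D l
          rw [hcop] at this
          push_cast at this
          linarith [this]
        have huΛ : u ∈ Λr := by
          have h1 : (D:ℤ) • u ∈ Λr := hDco u hu
          have h2 : ((l:ℕ):ℤ) • u ∈ Λr := by
            rw [hlu]; exact AddSubgroup.zsmul_mem _ hvΛ _
          have h3 : u = c • ((D:ℤ) • u) + d • (((l:ℕ):ℤ) • u) := by
            rw [← mul_smul, ← mul_smul, ← add_smul, hcd, one_smul]
          rw [h3]
          exact add_mem (AddSubgroup.zsmul_mem _ h1 _) (AddSubgroup.zsmul_mem _ h2 _)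
        have hw : a • v + b • u ∈ Λr :=
          add_mem (AddSubgroup.zsmul_mem _ hvΛ _) (AddSubgroup.zsmul_mem _ huΛ _)
        exact (AddSubgroup.mem_smul_pointwise_iff_exists v _ Λr).mpr
          ⟨a • v + b • u, hw, hvw _ hu2⟩
    · -- l even
      have h2l : 2 * l' = l := hevenl hodd
      have hl'u : ((l':ℕ):ℤ) • u = v := by
        rw [hzr, ← huv]; congr 1
        rw [show (l:ℕ) = 2 * l' from h2l.symm]; push_cast; ring
      split_ifs with hDl
      · exact (AddSubgroup.mem_smul_pointwise_iff_exists v _ coΛr).mpr ⟨u, hu, hl'u⟩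
      · have hDp : Nat.Prime D := by
          rcases hD with h1 | h1
          · exact absurd (by rw [h1]; exact one_dvd _ : D ∣ l') hDl
          · exact h1
        obtain ⟨c, d, hcd⟩ : ∃ c d : ℤ, c * D + d * l' = 1 := by
          have hcop : Nat.Coprime D l' := (Nat.Prime.coprime_iff_not_dvd hDp).mpr hDl
          refine ⟨Nat.gcdA D l', Nat.gcdB D l', ?_⟩
          have := Nat.gcd_eq_gcd_ab D l'
          rw [hcop] at this
          push_cast at this
          linarith [this]
        have huΛ : u ∈ Λr := by
          have h1 : (D:ℤ) • u ∈ Λr := hDco u hu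
          have h2 : ((l':ℕ):ℤ) • u ∈ Λr := by rw [hl'u]; exact hvΛ
          have h3 : u = c • ((D:ℤ) • u) + d • (((l':ℕ):ℤ) • u) := by
            rw [← mul_smul, ← mul_smul, ← add_smul, hcd, one_smul]
          rw [h3]
          exact add_mem (AddSubgroup.zsmul_mem _ h1 _) (AddSubgroup.zsmul_mem _ h2 _)
        exact (AddSubgroup.mem_smul_pointwise_iff_exists v _ Λr).mpr ⟨u, huΛ, hl'u⟩
  -- ===================== group part =====================
  set SR : Set (Equiv.Perm E) := {g | ∃ α ∈ Φ, ∀ x, g x = rootReflection α x} with hSR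
  have hSRinv : ∀ g ∈ SR, g⁻¹ = g := by
    rintro g ⟨α, hα, hg⟩
    have hgg : ∀ x : E, g (g x) = x := fun x => by
      rw [hg, hg, rr_invol α (hne α hα)]
    ext x
    have h1 := hgg (g⁻¹ x)
    rw [show g (g⁻¹ x) = x from g.apply_symm_apply x] at h1
    exact h1.symm
  have hsco : ∀ α ∈ Φ, ∀ x ∈ coΛr, rootReflection α x ∈ coΛr := by
    intro α hα x hx
    rw [hcoΛr] at hx
    induction hx using AddSubgroup.closure_induction with
    | mem y hy =>
      obtain ⟨β, hβ, rfl⟩ := hy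
      have h1 : rootReflection α ((2 / ⟪β, β⟫) • β)
          = (2 / ⟪rootReflection α β, rootReflection α β⟫) • rootReflection α β := by
        rw [rr_smul, rr_inner α (hne α hα)]
      rw [h1]
      exact hcogen _ (hrefl α hα β hβ)
    | zero => rw [rr_zero]; exact zero_mem _
    | add x y _ _ hx hy => rw [rr_add]; exact add_mem hx hy
    | neg x _ hx => rw [rr_neg]; exact neg_mem hx
  set Wr : Subgroup (Equiv.Perm E) := Subgroup.closure SR with hWr
  have hWrWl : Wr ≤ Wl := by rw [hWl]; exact Subgroup.closure_mono Set.subset_union_left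
  have hwr : ∀ w ∈ Wr, ((∀ x y : E, w (x + y) = w x + w y)
      ∧ (∀ (c : ℝ) (x : E), w (c • x) = c • w x)
      ∧ (∀ v ∈ coΛr, w v ∈ coΛr)) ∧ ((∀ x y : E, w⁻¹ (x + y) = w⁻¹ x + w⁻¹ y)
      ∧ (∀ (c : ℝ) (x : E), w⁻¹ (c • x) = c • w⁻¹ x)
      ∧ (∀ v ∈ coΛr, w⁻¹ v ∈ coΛr)) := by
    intro w hw
    induction hw using Subgroup.closure_induction with
    | mem g hg =>
      obtain ⟨α, hα, hgf⟩ := hg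
      have hbase : (∀ x y : E, g (x + y) = g x + g y) ∧ (∀ (c:ℝ) (x:E), g (c•x) = c • g x)
          ∧ (∀ v ∈ coΛr, g v ∈ coΛr) :=
        ⟨fun x y => by rw [hgf, hgf, hgf, rr_add],
         fun c x => by rw [hgf, hgf, rr_smul],
         fun v hv => by rw [hgf]; exact hsco α hα v hv⟩
      exact ⟨hbase, by rw [hSRinv g ⟨α, hα, hgf⟩]; exact hbase⟩
    | one =>
      refine ⟨⟨fun x y => rfl, fun c x => rfl, fun v hv => hv⟩, ?_⟩
      rw [inv_one]; exact ⟨fun x y => rfl, fun c x => rfl, fun v hv => hv⟩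
    | mul g h _ _ ihg ihh =>
      constructor
      · exact ⟨fun x y => by simp only [Equiv.Perm.mul_apply, ihh.1.1, ihg.1.1],
          fun c x => by simp only [Equiv.Perm.mul_apply, ihh.1.2.1, ihg.1.2.1],
          fun v hv => by simp only [Equiv.Perm.mul_apply]; exact ihg.1.2.2 _ (ihh.1.2.2 v hv)⟩
      · rw [mul_inv_rev]
        exact ⟨fun x y => by simp only [Equiv.Perm.mul_apply, ihg.2.1, ihh.2.1],
          fun c x => by simp only [Equiv.Perm.mul_apply, ihg.2.2.1, ihh.2.2.1],
          fun v hv => by simp only [Equiv.Perm.mul_apply]; exact ihh.2.2.2 _ (ihg.2.2.2 v hv)⟩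
    | inv g _ ihg => exact ⟨ihg.2, by rw [inv_inv]; exact ihg.1⟩
  have hwrMdag : ∀ w ∈ Wr, ∀ v ∈ Mdag, w v ∈ Mdag := by
    intro w hw v hv
    rw [hMdag] at hv ⊢
    obtain ⟨u, hu, huv⟩ := (AddSubgroup.mem_smul_pointwise_iff_exists v _ coΛr).mp hv
    refine (AddSubgroup.mem_smul_pointwise_iff_exists _ _ coΛr).mpr
      ⟨w u, (hwr w hw).1.2.2 u hu, ?_⟩
    rw [← huv, (hwr w hw).1.2.1]
  -- decomposition of elements of Wdag
  have hdec : ∀ g ∈ Wdag, ∃ w ∈ Wr, ∃ v ∈ Mdag, ∀ x, g x = w x + v := by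
    intro g hg
    rw [hWdag] at hg
    induction hg using Subgroup.closure_induction with
    | mem g hg =>
      rcases hg with hgr | ⟨m, hm, hgt⟩
      · exact ⟨g, Subgroup.subset_closure hgr, 0, zero_mem _, fun x => by rw [add_zero]⟩
      · exact ⟨1, one_mem _, m, hm, fun x => by rw [hgt]; rfl⟩
    | one => exact ⟨1, one_mem _, 0, zero_mem _, fun x => by simp⟩
    | mul g h _ _ ihg ihh =>
      obtain ⟨w1, hw1, v1, hv1, hg1⟩ := ihg
      obtain ⟨w2, hw2, v2, hv2, hg2⟩ := ihh
      refine ⟨w1 * w2, mul_mem hw1 hw2, w1 v2 + v1,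
        add_mem (hwrMdag w1 hw1 v2 hv2) hv1, fun x => ?_⟩
      rw [Equiv.Perm.mul_apply, hg1, hg2, (hwr w1 hw1).1.1, Equiv.Perm.mul_apply, add_assoc]
    | inv g hgW ihg =>
      obtain ⟨w, hwW, v, hv, hgv⟩ := ihg
      refine ⟨w⁻¹, inv_mem hwW, -(w⁻¹ v),
        neg_mem (hwrMdag w⁻¹ (inv_mem hwW) v hv), fun x => ?_⟩
      have hnegw : ∀ y : E, w (-y) = - w y := fun y => by
        have h := (hwr w hwW).1.2.1 (-1 : ℝ) y; simpa using h
      have h1 : g (w⁻¹ x + -(w⁻¹ v)) = x := by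
        rw [hgv, (hwr w hwW).1.1, hnegw, (show ∀ y, w (w⁻¹ y) = y from w.apply_symm_apply),
          (show ∀ y, w (w⁻¹ y) = y from w.apply_symm_apply)]
        abel
      calc g⁻¹ x = g⁻¹ (g (w⁻¹ x + -(w⁻¹ v))) := by rw [h1]
        _ = w⁻¹ x + -(w⁻¹ v) := g.symm_apply_apply _
  -- elements of Wl preserve Λr under the dot action
  have hdotWl : ∀ g ∈ Wl, ∀ μ ∈ Λr, g (μ + ρ) - ρ ∈ Λr := by
    have main : ∀ g ∈ Wl, (∀ μ ∈ Λr, g (μ + ρ) - ρ ∈ Λr)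
        ∧ (∀ μ ∈ Λr, g⁻¹ (μ + ρ) - ρ ∈ Λr) := by
      intro g hg
      rw [hWl] at hg
      induction hg using Subgroup.closure_induction with
      | mem g hg =>
        rcases hg with ⟨α, hα, hgf⟩ | ⟨m, hm, hgt⟩
        · have hbase : ∀ μ ∈ Λr, g (μ + ρ) - ρ ∈ Λr := by
            intro μ hμ
            rw [hgf, rr_eq, cf_add]
            obtain ⟨n, hn⟩ := hcfΛ α hα μ hμ
            obtain ⟨k, hk⟩ := hcfρ α hα
            have heq : μ + ρ - (cf α μ + cf α ρ) • α - ρ = μ - (((n + k : ℤ)) : ℝ) • α := by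
              rw [hn, hk]; push_cast; abel
            rw [heq, ← hzr]
            exact sub_mem hμ (AddSubgroup.zsmul_mem _ (hrootΛ α hα) _)
          refine ⟨hbase, ?_⟩
          rw [hSRinv g ⟨α, hα, hgf⟩]; exact hbase
        · constructor
          · intro μ hμ
            rw [hgt]
            have heq : μ + ρ + m - ρ = μ + m := by abel
            rw [heq]; exact add_mem hμ (hMΛ m hm)
          · intro μ hμ
            have hginv : g⁻¹ (μ + ρ) = μ + ρ - m := by
              have h1 : g (μ + ρ - m) = μ + ρ := by rw [hgt]; abel
              have h2 : g⁻¹ (g (μ + ρ - m)) = g⁻¹ (μ + ρ) := by rw [h1]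
              rw [(show ∀ y, g⁻¹ (g y) = y from g.symm_apply_apply)] at h2
              exact h2.symm
            rw [hginv]
            have heq : μ + ρ - m - ρ = μ + (-m) := by abel
            rw [heq]; exact add_mem hμ (neg_mem (hMΛ m hm))
      | one =>
        constructor <;>
        · intro μ hμ
          simp only [inv_one, Equiv.Perm.one_apply]
          have heq : μ + ρ - ρ = μ := by abel
          rw [heq]; exact hμ
      | mul g h _ _ ihg ihh =>
        constructor
        · intro μ hμ
          rw [Equiv.Perm.mul_apply]
          have h1 := ihh.1 μ hμ
          have h2 := ihg.1 _ h1
          have heq : h (μ + ρ) - ρ + ρ = h (μ + ρ) := by abel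
          rw [heq] at h2; exact h2
        · intro μ hμ
          rw [mul_inv_rev, Equiv.Perm.mul_apply]
          have h1 := ihg.2 μ hμ
          have h2 := ihh.2 _ h1
          have heq : g⁻¹ (μ + ρ) - ρ + ρ = g⁻¹ (μ + ρ) := by abel
          rw [heq] at h2; exact h2
      | inv g _ ihg => exact ⟨ihg.2, by rw [inv_inv]; exact ihg.1⟩
    exact fun g hg => (main g hg).1
  -- Wl ≤ Wdag
  have hle : Wl ≤ Wdag := by
    rw [hWl, hWdag]
    apply Subgroup.closure_mono
    apply Set.union_subset_union_right
    rintro g ⟨m, hm, hgt⟩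
    exact ⟨m, hMMdag m hm, hgt⟩
  refine ⟨hle, ?_, ?_⟩
  · intro g hgdag
    constructor
    · exact fun hg => hdotWl g hg
    · intro hpres
      obtain ⟨w, hwW, v, hv, hgv⟩ := hdec g hgdag
      have hwWl : w ∈ Wl := hWrWl hwW
      have h1 : g (0 + ρ) - ρ ∈ Λr := hpres 0 (zero_mem _)
      have h2 : w (0 + ρ) - ρ ∈ Λr := hdotWl w hwWl 0 (zero_mem _)
      have hvΛ : v ∈ Λr := by
        have h3 : g (0 + ρ) - ρ = (w (0 + ρ) - ρ) + v := by rw [hgv]; abel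
        have h5 := sub_mem h1 h2
        rw [h3] at h5
        have h4 : w (0 + ρ) - ρ + v - (w (0 + ρ) - ρ) = v := by abel
        rw [h4] at h5
        exact h5
      have hvM : v ∈ M := hMdagΛM v hv hvΛ
      have htv : Equiv.addRight v ∈ Wl := by
        rw [hWl]
        exact Subgroup.subset_closure (Or.inr ⟨v, hvM, fun x => rfl⟩)
      have hgeq : g = (Equiv.addRight v) * w := by
        ext x
        simp only [Equiv.Perm.mul_apply, hgv, Equiv.coe_addRight]
      rw [hgeq]; exact mul_mem htv hwWl
  · intro hdvd
    have h2dvd : 2 ∣ l := dvd_trans (Dvd.intro D rfl) hdvd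
    have hodd : ¬ Odd l := by rw [Nat.odd_iff]; omega
    have h2l : 2 * l' = l := hevenl hodd
    have hDl' : D ∣ l' := by
      obtain ⟨k, hk⟩ := hdvd
      have h3 : 2 * l' = 2 * (D * k) := by rw [h2l, hk]; ring
      exact ⟨k, Nat.eq_of_mul_eq_mul_left two_pos h3⟩
    have hMeq : M = Mdag := by
      rw [hM, if_pos hDl', hMdag]
      ext x
      rw [AddSubgroup.mem_smul_pointwise_iff_exists,
        AddSubgroup.mem_smul_pointwise_iff_exists]
      constructor
      · rintro ⟨u, hu, heq⟩
        refine ⟨u, hu, ?_⟩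
        rw [← heq, hzr]; congr 1
        rw [show (l : ℕ) = 2 * l' from h2l.symm]; push_cast; ring
      · rintro ⟨u, hu, heq⟩
        refine ⟨u, hu, ?_⟩
        rw [← heq, hzr]; congr 1
        rw [show (l : ℕ) = 2 * l' from h2l.symm]; push_cast; ring
    apply le_antisymm hle
    rw [hWl, hWdag, hMeq]
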